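/- arXiv:2504.20737 — 8 statements merged into one kernel-verified Lean document; each statement's English description precedes it below -/
import Mathlib

section
/- For every a ∈ ℝⁿ and every K, K' ∈ 𝔎, one has |j_K(a) − j_{K'}(a)| ≤ d_H(K,K')·|a| / (r_min(K)·r_min(K')). -/
open MeasureTheory Metric Set Pointwise

noncomputable section

abbrev Evec (n : ℕ) := EuclideanSpace ℝ (Fin n)

/-- `K` is a compact convex set containing `0` in its interior. -/
def IsConvexBody {n : ℕ} (K : Set (Evec n)) : Prop :=
  IsCompact K ∧ Convex ℝ K ∧ 0 ∈ interior K

def rMin {n : ℕ} (K : Set (Evec n)) : ℝ := sSup {R : ℝ | 0 ≤ R ∧ closedBall 0 R ⊆ K}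

lemma rMin_aux {n : ℕ} (hn : 2 ≤ n) (K : Set (Evec n)) (hK : IsConvexBody K) :
    0 < rMin K ∧ closedBall 0 (rMin K) ⊆ K := by
  obtain ⟨hKc, hKconv, hK0⟩ := hK
  obtain ⟨ε, hε, hball⟩ := Metric.isOpen_iff.1 isOpen_interior 0 hK0
  have hεK : ball (0 : Evec n) ε ⊆ K := hball.trans interior_subset
  obtain ⟨M, hM⟩ := hKc.isBounded.subset_closedBall 0
  set S := {R : ℝ | 0 ≤ R ∧ closedBall (0 : Evec n) R ⊆ K} with hS
  have hne : (ε / 2) ∈ S := by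
    refine ⟨by positivity, ?_⟩
    exact (closedBall_subset_ball (by linarith)).trans hεK
  have hbdd : BddAbove S := by
    refine ⟨M, fun R hR => ?_⟩
    have : (EuclideanSpace.single (⟨0, by omega⟩ : Fin n) R) ∈ closedBall (0 : Evec n) R := by
      simp [EuclideanSpace.norm_single, abs_of_nonneg hR.1]
    have := hM (hR.2 this)
    simpa [EuclideanSpace.norm_single, abs_of_nonneg hR.1] using this
  have hpos : 0 < rMin K := lt_of_lt_of_le (by positivity) (le_csSup hbdd hne)
  refine ⟨hpos, fun x hx => ?_⟩
  simp only [mem_closedBall, dist_zero_right] at hx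
  -- t • x ∈ K for t ∈ [0,1)
  have hsub : ∀ t : ℝ, 0 ≤ t → t < 1 → t • x ∈ K := by
    intro t ht ht1
    rcases eq_or_lt_of_le (norm_nonneg x) with h0 | h0
    · have : x = 0 := by simpa using h0.symm
      simp [this, smul_zero]
      exact interior_subset hK0
    · have hlt : t * ‖x‖ < rMin K := by
        calc t * ‖x‖ < 1 * ‖x‖ := by exact mul_lt_mul_of_pos_right ht1 h0
        _ = ‖x‖ := one_mul _
        _ ≤ rMin K := hx
      obtain ⟨R, hRS, hR⟩ := exists_lt_of_lt_csSup ⟨_, hne⟩ hlt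
      refine hRS.2 ?_
      simp only [mem_closedBall, dist_zero_right, norm_smul, Real.norm_of_nonneg ht]
      exact le_of_lt hR
  have htend : Filter.Tendsto (fun k : ℕ => (1 - 1 / (k + 1) : ℝ) • x) Filter.atTop (nhds x) := by
    have h1 : Filter.Tendsto (fun k : ℕ => (1 - 1 / (k + 1) : ℝ)) Filter.atTop (nhds 1) := by
      have : Filter.Tendsto (fun k : ℕ => 1 / ((k : ℝ) + 1)) Filter.atTop (nhds 0) :=
        tendsto_one_div_add_atTop_nhds_zero_nat
      simpa using (tendsto_const_nhds (x := (1:ℝ))).sub this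
    simpa using h1.smul (tendsto_const_nhds (x := x))
  refine hKc.isClosed.mem_of_tendsto htend (Filter.Eventually.of_forall fun k => ?_)
  refine hsub _ ?_ ?_
  · have : (1 : ℝ) / (k + 1) ≤ 1 := by
      rw [div_le_one (by positivity)]; linarith
    linarith
  · have : (0 : ℝ) < 1 / (k + 1) := by positivity
    linarith

lemma gauge_le_norm_div {n : ℕ} (hn : 2 ≤ n) (K : Set (Evec n)) (hK : IsConvexBody K)
    (a : Evec n) : gauge K a ≤ ‖a‖ / rMin K := by
  obtain ⟨hpos, hsub⟩ := rMin_aux hn K hK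
  rw [← gauge_closedBall hpos.le]
  exact gauge_mono ((absorbent_ball_zero hpos).mono ball_subset_closedBall) hsub a

lemma gauge_sub_le {n : ℕ} (hn : 2 ≤ n) (a : Evec n) (K K' : Set (Evec n))
    (hK : IsConvexBody K) (hK' : IsConvexBody K') :
    gauge K' a - gauge K a ≤ hausdorffDist K K' * ‖a‖ / (rMin K * rMin K') := by
  obtain ⟨hr, hrsub⟩ := rMin_aux hn K hK
  obtain ⟨hr', hrsub'⟩ := rMin_aux hn K' hK'
  set δ := hausdorffDist K K' with hδdef
  have hδ0 : 0 ≤ δ := hausdorffDist_nonneg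
  have hfin : EMetric.hausdorffEdist K K' ≠ ⊤ :=
    hausdorffEdist_ne_top_of_nonempty_of_bounded ⟨0, interior_subset hK.2.2⟩
      ⟨0, interior_subset hK'.2.2⟩ hK.1.isBounded hK'.1.isBounded
  -- for any η > δ, K ⊆ (1 + η / rMin K') • K'
  have hkey : ∀ η : ℝ, δ < η → gauge K' a ≤ gauge K a + η * ‖a‖ / (rMin K * rMin K') := by
    intro η hη
    have hη0 : 0 ≤ η := hδ0.trans hη.le
    have hsubset : K ⊆ (1 + η / rMin K') • K' := by
      intro x hxK
      obtain ⟨y, hyK', hdxy⟩ := exists_dist_lt_of_hausdorffDist_lt hxK hη hfin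
      have hxy : x - y ∈ (η / rMin K') • K' := by
        have h1 : x - y ∈ closedBall (0 : Evec n) η := by
          simp only [mem_closedBall, dist_zero_right]
          rw [← dist_eq_norm]; exact hdxy.le
        have h2 : (η / rMin K') • closedBall (0 : Evec n) (rMin K') = closedBall 0 η := by
          rw [smul_closedBall _ _ hr'.le, smul_zero, Real.norm_of_nonneg (by positivity),
            div_mul_cancel₀ _ hr'.ne']
        rw [← h2] at h1
        exact smul_set_mono hrsub' h1
      have := Set.add_mem_add hyK' hxy
      rw [add_sub_cancel] at this
      rwa [hK'.2.1.add_smul (le_refl 0 |>.trans zero_le_one) (by positivity), one_smul]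
    have habs : Absorbent ℝ K := absorbent_nhds_zero (mem_interior_iff_mem_nhds.1 hK.2.2)
    have hmono := gauge_mono habs hsubset a
    rw [gauge_smul_left_of_nonneg (by positivity : (0:ℝ) ≤ 1 + η / rMin K')] at hmono
    simp only [Pi.smul_apply, smul_eq_mul] at hmono
    have hc : (0:ℝ) < 1 + η / rMin K' := by positivity
    have h1 : gauge K' a ≤ (1 + η / rMin K') * gauge K a := by
      rw [← inv_mul_le_iff₀ hc]; exact hmono
    calc gauge K' a ≤ (1 + η / rMin K') * gauge K a := h1
      _ = gauge K a + (η / rMin K') * gauge K a := by ring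
      _ ≤ gauge K a + (η / rMin K') * (‖a‖ / rMin K) := by
          exact add_le_add le_rfl (mul_le_mul_of_nonneg_left
            (gauge_le_norm_div hn K hK a) (by positivity))
      _ = gauge K a + η * ‖a‖ / (rMin K * rMin K') := by ring
  rw [sub_le_iff_le_add, add_comm]
  refine le_of_forall_pos_le_add fun ε hε => ?_
  rcases eq_or_lt_of_le (norm_nonneg a) with h0 | h0
  · have ha : a = 0 := by simpa using h0.symm
    simp only [ha, gauge_zero, norm_zero]
    positivity
  · set c := ‖a‖ / (rMin K * rMin K') with hc
    have hcpos : 0 < c := by positivity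
    have := hkey (δ + ε / c) (by linarith [div_pos hε hcpos])
    calc gauge K' a ≤ gauge K a + (δ + ε / c) * ‖a‖ / (rMin K * rMin K') := this
      _ = gauge K a + δ * ‖a‖ / (rMin K * rMin K') + (ε / c) * c := by rw [hc]; ring
      _ = gauge K a + δ * ‖a‖ / (rMin K * rMin K') + ε := by
          rw [div_mul_cancel₀ _ hcpos.ne']

/-- Lipschitz estimate for the gauge with respect to the Hausdorff distance. -/
theorem gauge_lipschitz_hausdorff {n : ℕ} (hn : 2 ≤ n)
    (a : Evec n) (K K' : Set (Evec n)) (hK : IsConvexBody K) (hK' : IsConvexBody K') :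
    |gauge K a - gauge K' a| ≤ hausdorffDist K K' * ‖a‖ / (rMin K * rMin K') := by
  rw [abs_sub_le_iff]
  constructor
  · have := gauge_sub_le hn a K' K hK' hK
    rwa [hausdorffDist_comm, mul_comm (rMin K') (rMin K)] at this
  · exact gauge_sub_le hn a K K' hK hK'
end
end

section
/- Every uniformly convex K ∈ 𝔎 is properly convex: for every x in the topological boundary ∂K of K, there exist y ∈ ℝⁿ and R ≥ 0 such that K ⊆ B(y,R) and |x − y| = R. -/
open MeasureTheory Metric Set
open scoped Topology RealInnerProductSpace

set_option maxHeartbeats 1000000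

noncomputable section

/-- `c`-uniform convexity of the squared gauge. -/
def UnifConvexGauge {n : ℕ} (K : Set (Evec n)) (c : ℝ) : Prop :=
  ∀ x y : Evec n,
    2 * gauge K x ^ 2 + c * gauge K y ^ 2 ≤ gauge K (x + y) ^ 2 + gauge K (x - y) ^ 2

/-- A uniformly convex body is properly convex: every boundary point lies on a sphere
enclosing `K`. -/
theorem uniformly_convex_properly_convex {n : ℕ} (hn : 2 ≤ n)
    (K : Set (Evec n)) (hK : IsConvexBody K)
    (hu : ∃ c > (0:ℝ), UnifConvexGauge K c) :
    ∀ x ∈ frontier K, ∃ (y : Evec n) (R : ℝ), 0 ≤ R ∧ K ⊆ closedBall y R ∧ ‖x - y‖ = R := by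
  obtain ⟨c, hc, huc⟩ := hu
  obtain ⟨hKcomp, hKconv, h0⟩ := hK
  intro x hx
  have hKcl : IsClosed K := hKcomp.isClosed
  have hnhds : K ∈ 𝓝 0 := mem_interior_iff_mem_nhds.mp h0
  have habs : Absorbent ℝ K := absorbent_nhds_zero hnhds
  have hgx : gauge K x = 1 := (gauge_eq_one_iff_mem_frontier hKconv hnhds).mpr hx
  obtain ⟨M₀, hM₀⟩ := hKcomp.isBounded.subset_closedBall 0
  set M : ℝ := max M₀ 1 with hMdef
  have hM : 0 < M := lt_of_lt_of_le one_pos (le_max_right _ _)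
  have hKM : K ⊆ closedBall 0 M :=
    hM₀.trans (closedBall_subset_closedBall (le_max_left _ _))
  have hxK : x ∈ K := hKcl.frontier_subset hx
  -- supporting functional
  obtain ⟨f, hf⟩ := geometric_hahn_banach_open_point hKconv.interior isOpen_interior hx.2
  have hp : 0 < f x := by
    have := hf 0 h0
    simpa using this
  set p : ℝ := f x with hpdef
  -- f ≤ f x on K
  have hfK : ∀ z ∈ K, f z ≤ p := by
    intro z hz
    rcases le_or_gt (f z) 0 with h | h
    · exact h.trans hp.le
    by_contra hcon
    push_neg at hcon
    have ht : p / f z ∈ Set.Ioo (0:ℝ) 1 := by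
      constructor
      · exact div_pos hp h
      · rw [div_lt_one h]; exact hcon
    have hmem : (p / f z) • z ∈ interior K := by
      have := hKconv.combo_interior_closure_mem_interior h0 (subset_closure hz)
        (a := 1 - p / f z) (b := p / f z) (by linarith [ht.2]) ht.1.le (by ring)
      simpa using this
    have := hf _ hmem
    rw [f.map_smul] at this
    simp only [smul_eq_mul] at this
    rw [div_mul_cancel₀ _ h.ne'] at this
    exact lt_irrefl _ this
  -- f ≤ p * gauge
  have hfgauge : ∀ v : Evec n, f v ≤ p * gauge K v := by
    intro v
    have hdiv : f v / p ≤ gauge K v := by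
      rw [gauge_def]
      apply le_csInf (habs.gauge_set_nonempty)
      rintro r ⟨hr, hvr⟩
      obtain ⟨w, hw, rfl⟩ := hvr
      rw [f.map_smul]
      simp only [smul_eq_mul]
      rw [div_le_iff₀ hp]
      calc r * f w ≤ r * p := by
            exact mul_le_mul_of_nonneg_left (hfK w hw) (le_of_lt hr)
        _ ≤ r * p := le_refl _
    calc f v = p * (f v / p) := by field_simp
      _ ≤ p * gauge K v := mul_le_mul_of_nonneg_left hdiv hp.le
  -- the quadratic separation estimate
  set δ : ℝ := p * min (c / (8 * M ^ 2)) (1 / (2 * M ^ 2)) with hδdef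
  have hδ : 0 < δ := by
    apply mul_pos hp
    apply lt_min
    · positivity
    · positivity
  have hsep : ∀ z ∈ K, δ * ‖x - z‖ ^ 2 ≤ p - f z := by
    intro z hz
    have hxM : ‖x‖ ≤ M := by simpa using hKM hxK
    have hzM : ‖z‖ ≤ M := by simpa using hKM hz
    have hxz : ‖x - z‖ ≤ 2 * M := by
      calc ‖x - z‖ ≤ ‖x‖ + ‖z‖ := norm_sub_le _ _
        _ ≤ 2 * M := by linarith
    have hgz : gauge K z ≤ 1 := gauge_le_one_of_mem hz
    have hgz0 : 0 ≤ gauge K z := gauge_nonneg _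
    -- uniform convexity applied to midpoints
    set t : ℝ := gauge K (x - z) with htdef
    have ht0 : 0 ≤ t := gauge_nonneg _
    have htM : ‖x - z‖ / M ≤ t :=
      le_gauge_of_subset_closedBall habs hM.le hKM
    have hmain : 2 * gauge K ((2⁻¹ : ℝ) • (x + z)) ^ 2 + c * (2⁻¹ * t) ^ 2 ≤ 2 := by
      have h1 : (2⁻¹ : ℝ) • (x + z) + (2⁻¹ : ℝ) • (x - z) = x := by module
      have h2 : (2⁻¹ : ℝ) • (x + z) - (2⁻¹ : ℝ) • (x - z) = z := by module
      have := huc ((2⁻¹ : ℝ) • (x + z)) ((2⁻¹ : ℝ) • (x - z))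
      rw [h1, h2, hgx] at this
      have hsm : gauge K ((2⁻¹ : ℝ) • (x - z)) = 2⁻¹ * t := by
        rw [gauge_smul_of_nonneg (by norm_num : (0:ℝ) ≤ 2⁻¹)]
        simp [htdef]
      rw [hsm] at this
      nlinarith [sq_nonneg (gauge K z)]
    set m : Evec n := (2⁻¹ : ℝ) • (x + z) with hmdef
    have hfm : f m = (p + f z) / 2 := by
      rw [hmdef, f.map_smul]
      simp only [smul_eq_mul, map_add]
      ring
    rcases le_or_gt 0 (f m) with hq | hq
    · -- main case
      have hgm : f m ≤ p * gauge K m := hfgauge m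
      have hgm0 : 0 ≤ gauge K m := gauge_nonneg _
      have hfm2 : f m ^ 2 ≤ p ^ 2 * gauge K m ^ 2 := by nlinarith
      have hgm2 : gauge K m ^ 2 ≤ 1 - c / 8 * t ^ 2 := by nlinarith
      have hkey : p * (c / 8) * t ^ 2 ≤ p - f z := by
        have hfzp : f z ≤ p := hfK z hz
        nlinarith [sq_nonneg (p - f z), hp]
      have ht2 : ‖x - z‖ ^ 2 / M ^ 2 ≤ t ^ 2 := by
        have := mul_self_le_mul_self (by positivity) htM
        calc ‖x - z‖ ^ 2 / M ^ 2 = (‖x - z‖ / M) * (‖x - z‖ / M) := by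
              field_simp; try ring
          _ ≤ t * t := this
          _ = t ^ 2 := by ring
      calc δ * ‖x - z‖ ^ 2 ≤ p * (c / (8 * M ^ 2)) * ‖x - z‖ ^ 2 := by
            apply mul_le_mul_of_nonneg_right _ (by positivity)
            exact mul_le_mul_of_nonneg_left (min_le_left _ _) hp.le
        _ = p * (c / 8) * (‖x - z‖ ^ 2 / M ^ 2) := by field_simp; try ring
        _ ≤ p * (c / 8) * t ^ 2 := by
            apply mul_le_mul_of_nonneg_left ht2 (by positivity)
        _ ≤ p - f z := hkey
    · -- degenerate case : f m < 0, so f z < -p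
      have hfz : f z < -p := by rw [hfm] at hq; linarith
      calc δ * ‖x - z‖ ^ 2 ≤ p * (1 / (2 * M ^ 2)) * ‖x - z‖ ^ 2 := by
            apply mul_le_mul_of_nonneg_right _ (by positivity)
            exact mul_le_mul_of_nonneg_left (min_le_right _ _) hp.le
        _ ≤ p * (1 / (2 * M ^ 2)) * (2 * M) ^ 2 := by
            apply mul_le_mul_of_nonneg_left _ (by positivity)
            exact pow_le_pow_left₀ (norm_nonneg _) hxz 2
        _ = 2 * p := by field_simp; try ring
        _ ≤ p - f z := by linarith
  -- build the Riesz representation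
  set w : Evec n := (InnerProductSpace.toDual ℝ (Evec n)).symm f with hwdef
  have hwv : ∀ v : Evec n, (inner ℝ w v : ℝ) = f v := fun v =>
    InnerProductSpace.toDual_symm_apply
  refine ⟨x - (2 * δ)⁻¹ • w, (2 * δ)⁻¹ * ‖w‖, by positivity, ?_, ?_⟩
  · intro z hz
    rw [mem_closedBall, dist_eq_norm]
    have hineq := hsep z hz
    have hnorm2 : ‖z - (x - (2 * δ)⁻¹ • w)‖ ^ 2 ≤ ((2 * δ)⁻¹ * ‖w‖) ^ 2 := by
      have hsplit : z - (x - (2 * δ)⁻¹ • w) = (z - x) + (2 * δ)⁻¹ • w := by abel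
      rw [hsplit, norm_add_sq_real]
      have hip : (inner ℝ (z - x) ((2 * δ)⁻¹ • w) : ℝ) = (2 * δ)⁻¹ * (f z - p) := by
        rw [real_inner_smul_right, real_inner_comm, hwv, f.map_sub, hpdef]
      have hnw : ‖(2 * δ)⁻¹ • w‖ = (2 * δ)⁻¹ * ‖w‖ := by
        rw [norm_smul, Real.norm_eq_abs, abs_of_pos (by positivity : (0:ℝ) < (2*δ)⁻¹)]
      rw [hip, hnw]
      have hzx : ‖z - x‖ = ‖x - z‖ := norm_sub_rev _ _
      have h1 : (2 * δ)⁻¹ * (f z - p) ≤ -(‖x - z‖ ^ 2) / 2 := by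
        have : f z - p ≤ -(δ * ‖x - z‖ ^ 2) := by linarith [hineq]
        calc (2 * δ)⁻¹ * (f z - p) ≤ (2 * δ)⁻¹ * (-(δ * ‖x - z‖ ^ 2)) := by
              apply mul_le_mul_of_nonneg_left this (by positivity)
          _ = -(‖x - z‖ ^ 2) / 2 := by field_simp; try ring
      have hzx2 : ‖z - x‖ ^ 2 = ‖x - z‖ ^ 2 := by rw [hzx]
      linarith [h1, hzx2]
    have hR : (0:ℝ) ≤ (2 * δ)⁻¹ * ‖w‖ := by positivity
    exact (pow_le_pow_iff_left₀ (norm_nonneg _) hR two_ne_zero).mp hnorm2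
  · have : x - (x - (2 * δ)⁻¹ • w) = (2 * δ)⁻¹ • w := by abel
    rw [this, norm_smul, Real.norm_eq_abs, abs_of_pos (by positivity : (0:ℝ) < (2*δ)⁻¹)]
end
end

section
/- Let e ∈ ℝⁿ with |e| = 1 and let r₂ ≥ r₁ ≥ 0. Set K = B(r₁·e, r₂) ∩ B(−r₁·e, r₂). Then a_K = r₂² − r₁². -/
open MeasureTheory Metric Set

noncomputable section

/-- `a_K = inf {R² − |ū|² : K ⊆ B(ū,R), R > 0}`. -/
def aConst {n : ℕ} (K : Set (Evec n)) : ℝ :=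
  sInf {s : ℝ | ∃ (u : Evec n) (R : ℝ), 0 < R ∧ K ⊆ closedBall u R ∧ s = R ^ 2 - ‖u‖ ^ 2}

open RealInnerProductSpace

lemma exists_unit_orthogonal {n : ℕ} (hn : 2 ≤ n) (e : Evec n) :
    ∃ f : Evec n, ‖f‖ = 1 ∧ ⟪e, f⟫ = 0 := by
  have hdim : Module.finrank ℝ (Evec n) = n := by simp
  have h1 : Module.finrank ℝ (ℝ ∙ e) ≤ 1 :=
    (finrank_span_le_card ({e} : Set (Evec n))).trans (by simp)
  have h2 := Submodule.finrank_add_finrank_orthogonal (ℝ ∙ e)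
  rw [hdim] at h2
  have hpos : 0 < Module.finrank ℝ ((ℝ ∙ e)ᗮ) := by omega
  obtain ⟨v, hv, hv0⟩ := exists_mem_ne_zero_of_rank_pos
    (s := (ℝ ∙ e)ᗮ) (by
      rw [← Submodule.finrank_eq_rank]
      exact_mod_cast hpos)
  refine ⟨‖v‖⁻¹ • v, ?_, ?_⟩
  · rw [norm_smul, norm_inv, norm_norm, inv_mul_cancel₀ (norm_ne_zero_iff.2 hv0)]
  · rw [real_inner_smul_right]
    have : ⟪e, v⟫ = 0 := hv e (Submodule.mem_span_singleton_self e)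
    rw [this, mul_zero]

lemma exists_unit_orthogonal' {n : ℕ} (hn : 2 ≤ n) (e u : Evec n) (he : ‖e‖ = 1) :
    ∃ f : Evec n, ‖f‖ = 1 ∧ ⟪e, f⟫ = 0 ∧ 0 ≤ ⟪u, f⟫ := by
  set w : Evec n := u - ⟪u, e⟫ • e with hw_def
  have hew : ⟪e, w⟫ = 0 := by
    rw [hw_def, inner_sub_right, real_inner_smul_right, real_inner_self_eq_norm_sq, he,
      real_inner_comm]
    ring
  by_cases hw : w = 0
  · obtain ⟨f, hf1, hf2⟩ := exists_unit_orthogonal hn e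
    refine ⟨f, hf1, hf2, ?_⟩
    have hu : u = ⟪u, e⟫ • e := by
      have := sub_eq_zero.mp hw
      linear_combination (norm := module) this
    rw [hu, real_inner_smul_left, hf2, mul_zero]
  · refine ⟨‖w‖⁻¹ • w, ?_, ?_, ?_⟩
    · rw [norm_smul, norm_inv, norm_norm, inv_mul_cancel₀ (norm_ne_zero_iff.2 hw)]
    · rw [real_inner_smul_right, hew, mul_zero]
    · rw [real_inner_smul_right]
      have huw : ⟪u, w⟫ = ⟪w, w⟫ := by
        have : u = w + ⟪u, e⟫ • e := by rw [hw_def]; module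
        rw [this, inner_add_left, real_inner_smul_left, hew, mul_zero, add_zero]
      rw [huw]
      exact mul_nonneg (by positivity) real_inner_self_nonneg

/-- Value of `a_K` for the intersection of two balls `B(r₁e, r₂) ∩ B(−r₁e, r₂)`. -/
theorem aConst_ball_inter {n : ℕ} (hn : 2 ≤ n)
    (e : Evec n) (he : ‖e‖ = 1) (r₁ r₂ : ℝ) (hr₁ : 0 ≤ r₁) (hr₁₂ : r₁ ≤ r₂) :
    aConst (closedBall (r₁ • e) r₂ ∩ closedBall (-(r₁ • e)) r₂) = r₂ ^ 2 - r₁ ^ 2 := by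
  have hr₂ : 0 ≤ r₂ := le_trans hr₁ hr₁₂
  set K := closedBall (r₁ • e) r₂ ∩ closedBall (-(r₁ • e)) r₂ with hK
  set S := {s : ℝ | ∃ (u : Evec n) (R : ℝ), 0 < R ∧ K ⊆ closedBall u R ∧ s = R ^ 2 - ‖u‖ ^ 2}
    with hS
  set ρ := Real.sqrt (r₂ ^ 2 - r₁ ^ 2) with hρ_def
  have hρnn : 0 ≤ ρ := Real.sqrt_nonneg _
  have hρ2 : ρ ^ 2 = r₂ ^ 2 - r₁ ^ 2 := Real.sq_sqrt (by nlinarith)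
  -- membership of rim points
  have hmem : ∀ f : Evec n, ‖f‖ = 1 → ⟪e, f⟫ = 0 → ρ • f ∈ K := by
    intro f hf1 hf2
    have hfe : ⟪f, e⟫ = 0 := by rw [real_inner_comm]; exact hf2
    constructor
    · rw [mem_closedBall, dist_eq_norm]
      have hsq : ‖ρ • f - r₁ • e‖ ^ 2 = r₂ ^ 2 := by
        rw [norm_sub_sq_real, real_inner_smul_left, real_inner_smul_right, hfe, norm_smul,
          norm_smul, he, hf1]
        simp [abs_of_nonneg hρnn, abs_of_nonneg hr₁]
        nlinarith
      nlinarith [norm_nonneg (ρ • f - r₁ • e)]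
    · rw [mem_closedBall, dist_eq_norm, sub_neg_eq_add]
      have hsq : ‖ρ • f + r₁ • e‖ ^ 2 = r₂ ^ 2 := by
        rw [norm_add_sq_real, real_inner_smul_left, real_inner_smul_right, hfe, norm_smul,
          norm_smul, he, hf1]
        simp [abs_of_nonneg hρnn, abs_of_nonneg hr₁]
        nlinarith
      nlinarith [norm_nonneg (ρ • f + r₁ • e)]
  -- lower bound for all elements of S
  have hlb : ∀ s ∈ S, r₂ ^ 2 - r₁ ^ 2 ≤ s := by
    rintro s ⟨u, R, hR, hsub, rfl⟩
    obtain ⟨f, hf1, hf2, hf3⟩ := exists_unit_orthogonal' hn e u he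
    have hxK : ρ • (-f) ∈ K := by
      apply hmem
      · rw [norm_neg]; exact hf1
      · rw [inner_neg_right, hf2, neg_zero]
    have hdist := hsub hxK
    rw [mem_closedBall, dist_eq_norm] at hdist
    have hsq : ‖ρ • (-f) - u‖ ^ 2 ≤ R ^ 2 := by nlinarith [norm_nonneg (ρ • (-f) - u)]
    rw [norm_sub_sq_real] at hsq
    have h1 : ⟪ρ • (-f), u⟫ = -(ρ * ⟪u, f⟫) := by
      rw [real_inner_smul_left, inner_neg_left, real_inner_comm]; ring
    have h2 : ‖ρ • (-f)‖ ^ 2 = ρ ^ 2 := by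
      rw [norm_smul, norm_neg, hf1]; simp [abs_of_nonneg hρnn]
    rw [h1, h2] at hsq
    nlinarith [mul_nonneg hρnn hf3]
  have hbdd : BddBelow S := ⟨r₂ ^ 2 - r₁ ^ 2, hlb⟩
  have hKsub : ∀ δ : ℝ, 0 ≤ δ → K ⊆ closedBall (r₁ • e) (r₂ + δ) :=
    fun δ hδ => inter_subset_left.trans (closedBall_subset_closedBall (by linarith))
  have hnorm_r1e : ‖r₁ • e‖ = r₁ := by rw [norm_smul, he, mul_one, Real.norm_eq_abs,
    abs_of_nonneg hr₁]
  apply le_antisymm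
  · -- sInf S ≤ r₂² - r₁²
    rcases lt_or_eq_of_le hr₂ with h | h
    · exact csInf_le hbdd ⟨r₁ • e, r₂, h, hKsub 0 le_rfl |>.trans (by simp), by
        rw [hnorm_r1e]⟩
    · -- r₂ = 0
      have hr₁0 : r₁ = 0 := le_antisymm (h ▸ hr₁₂) hr₁
      have key : ∀ ε > (0 : ℝ), sInf S ≤ (r₂ ^ 2 - r₁ ^ 2) + ε := by
        intro ε hε
        have hsqε : (0:ℝ) < Real.sqrt ε := Real.sqrt_pos.2 hε
        refine csInf_le hbdd ⟨r₁ • e, Real.sqrt ε, hsqε, ?_, ?_⟩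
        · refine (hKsub 0 le_rfl).trans ?_
          rw [add_zero, ← h]
          exact closedBall_subset_closedBall (by positivity)
        · rw [hnorm_r1e, Real.sq_sqrt hε.le, hr₁0, ← h]; ring
      exact le_of_forall_pos_le_add key
  · exact le_csInf ⟨(r₂ + 1) ^ 2 - ‖r₁ • e‖ ^ 2,
      ⟨r₁ • e, r₂ + 1, by linarith, hKsub 1 zero_le_one, rfl⟩⟩ hlb
end
end

section
/- Let e ∈ ℝⁿ with |e| = 1, a ≥ 0, R = √(1 + a²), and K = B(−a·e, R) ∩ B(a·e, R). Then K ∈ 𝔎, K is (R−a)²-uniformly convex, and the function f(x) = j_K(x)² satisfies f((x+y)/2) ≤ (f(x) + f(y))/2 − |x−y|²/8 for all x, y ∈ ℝⁿ. -/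
open MeasureTheory Metric Set
open scoped RealInnerProductSpace Pointwise

set_option maxHeartbeats 1000000

noncomputable section

/-- If `G` is a positively homogeneous nonnegative function vanishing only at `0`,
whose unit "ball" is `K`, then the gauge of `K` is `G`. -/
private lemma gauge_eq_of_formula {E : Type*} [AddCommGroup E] [Module ℝ E]
    (K : Set E) (G : E → ℝ) (hGnn : ∀ z, 0 ≤ G z)
    (hG0 : ∀ z, G z = 0 → z = 0)
    (hmem : ∀ z, z ∈ K ↔ G z ≤ 1)
    (hsmul : ∀ c : ℝ, 0 < c → ∀ z, G (c • z) = c * G z)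
    (z : E) : gauge K z = G z := by
  rcases eq_or_lt_of_le (hGnn z) with h0 | hpos
  · have hz : z = 0 := hG0 z h0.symm
    subst hz; rw [gauge_zero, ← h0]
  · have hmem' : ∀ r : ℝ, 0 < r → (z ∈ r • K ↔ G z ≤ r) := by
      intro r hr
      rw [mem_smul_set_iff_inv_smul_mem₀ hr.ne' K z, hmem, hsmul r⁻¹ (by positivity) z,
        inv_mul_le_iff₀ hr, mul_one]
    apply le_antisymm
    · exact gauge_le_of_mem (hGnn z) ((hmem' _ hpos).2 le_rfl)
    · refine le_csInf ⟨G z, hpos, (hmem' _ hpos).2 le_rfl⟩ ?_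
      rintro r ⟨hr, hzr⟩
      exact (hmem' r hr).1 hzr

/-- The key scalar inequality. -/
private lemma key_scalar (px py sx sy X Y v : ℝ)
    (hpx : 0 ≤ px) (hpy : 0 ≤ py) (hX : 0 ≤ X) (hY : 0 ≤ Y)
    (hsxnn : 0 ≤ sx) (hsynn : 0 ≤ sy)
    (hsx : sx ^ 2 = px ^ 2 + X ^ 2) (hsy : sy ^ 2 = py ^ 2 + Y ^ 2)
    (hdn : |X - Y| ≤ v) :
    -(v ^ 2 / 4) ≤ (px - py) * ((px + sx) - (py + sy)) := by
  have hv : 0 ≤ v := (abs_nonneg _).trans hdn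
  by_cases h : sx + sy = 0
  · have hsx0 : sx = 0 := by linarith
    have hsy0 : sy = 0 := by linarith
    have hpx0 : px = 0 := by nlinarith
    have hpy0 : py = 0 := by nlinarith
    rw [hpx0, hpy0, hsx0, hsy0]
    nlinarith
  · have hpos : 0 < sx + sy := lt_of_le_of_ne (by positivity) (Ne.symm h)
    have hXsx : X ≤ sx := by nlinarith
    have hYsy : Y ≤ sy := by nlinarith
    have e2 : -(|px - py| * v) ≤ (px - py) * (X - Y) := by
      have h1 : -(|px - py| * v) ≤ -(|px - py| * |X - Y|) := by
        nlinarith [abs_nonneg (px - py)]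
      have h2 : -(|px - py| * |X - Y|) ≤ (px - py) * (X - Y) := by
        rw [← abs_mul]; exact neg_abs_le _
      linarith
    have e1 : (px - py) * (sx - sy) * (sx + sy)
        = (px - py) ^ 2 * (px + py) + (px - py) * (X - Y) * (X + Y) := by
      nlinarith [hsx, hsy]
    have h2 : -(|px - py| * v) * (sx + sy) ≤ (px - py) * (sx - sy) * (sx + sy) := by
      have ha1 : -(|px - py| * v) * (X + Y) ≤ (px - py) * (X - Y) * (X + Y) :=
        mul_le_mul_of_nonneg_right e2 (by linarith)
      have ha2 : -(|px - py| * v) * (sx + sy) ≤ -(|px - py| * v) * (X + Y) := by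
        have : -(|px - py| * v) ≤ 0 := by
          simp only [neg_nonpos]; positivity
        nlinarith
      nlinarith [sq_nonneg (px - py), hpx, hpy]
    have h3 : -(|px - py| * v) ≤ (px - py) * (sx - sy) :=
      le_of_mul_le_mul_right (by linarith [h2]) hpos
    have hfin : (px - py) * ((px + sx) - (py + sy)) = (px - py) ^ 2 + (px - py) * (sx - sy) := by
      ring
    rw [hfin]
    nlinarith [h3, sq_nonneg (|px - py| - v / 2), sq_abs (px - py)]

/-- The intersection of two balls `B(−ae, R) ∩ B(ae, R)` with `R = √(1+a²)` belongs to `𝔎`,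
is `(R−a)²`-uniformly convex, and its squared gauge is strongly convex with modulus `1`. -/
theorem ball_inter_uniformly_convex {n : ℕ} (hn : 2 ≤ n)
    (e : Evec n) (he : ‖e‖ = 1) (a : ℝ) (ha : 0 ≤ a)
    (R : ℝ) (hR : R = Real.sqrt (1 + a ^ 2))
    (K : Set (Evec n)) (hK : K = closedBall (-(a • e)) R ∩ closedBall (a • e) R) :
    IsConvexBody K ∧ UnifConvexGauge K ((R - a) ^ 2) ∧
    ∀ x y : Evec n,
      gauge K ((2:ℝ)⁻¹ • (x + y)) ^ 2 ≤
        (gauge K x ^ 2 + gauge K y ^ 2) / 2 - ‖x - y‖ ^ 2 / 8 := by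
  have hRnn : 0 ≤ R := hR ▸ Real.sqrt_nonneg _
  have hR2 : R ^ 2 = 1 + a ^ 2 := by
    rw [hR]; exact Real.sq_sqrt (by positivity)
  have haR : a < R := by nlinarith
  -- the linear functional t and the auxiliary norm s
  set t : Evec n → ℝ := fun z => a * ⟪z, e⟫ with ht
  set s : Evec n → ℝ := fun z => Real.sqrt ((t z) ^ 2 + ‖z‖ ^ 2) with hs
  have hs_nn : ∀ z, 0 ≤ s z := fun z => Real.sqrt_nonneg _
  have hs_sq : ∀ z, (s z) ^ 2 = (t z) ^ 2 + ‖z‖ ^ 2 := fun z =>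
    Real.sq_sqrt (by positivity)
  have ht_add : ∀ x y, t (x + y) = t x + t y := by
    intro x y; simp only [ht, inner_add_left]; ring
  have ht_smul : ∀ (c : ℝ) z, t (c • z) = c * t z := by
    intro c z; simp only [ht, real_inner_smul_left]; ring
  have ht_le : ∀ z, |t z| ≤ a * ‖z‖ := by
    intro z
    rw [ht, abs_mul, abs_of_nonneg ha]
    have := abs_real_inner_le_norm z e
    rw [he, mul_one] at this
    exact mul_le_mul_of_nonneg_left this ha
  have ht_le_s : ∀ z, |t z| ≤ s z := by
    intro z
    have h1 : (|t z|) ^ 2 ≤ (s z) ^ 2 := by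
      rw [hs_sq, sq_abs]; nlinarith [sq_nonneg ‖z‖]
    nlinarith [hs_nn z, abs_nonneg (t z)]
  have hnorm_le_s : ∀ z, ‖z‖ ≤ s z := by
    intro z
    have h1 : ‖z‖ ^ 2 ≤ (s z) ^ 2 := by rw [hs_sq]; nlinarith [sq_nonneg (t z)]
    nlinarith [hs_nn z, norm_nonneg z]
  have hs_le : ∀ z, s z ≤ R * ‖z‖ := by
    intro z
    have h1 : (s z) ^ 2 ≤ (R * ‖z‖) ^ 2 := by
      rw [hs_sq]
      have := ht_le z
      nlinarith [sq_abs (t z), abs_nonneg (t z), norm_nonneg z]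
    nlinarith [hs_nn z, norm_nonneg z, mul_nonneg hRnn (norm_nonneg z)]
  have hs_smul : ∀ (c : ℝ), 0 ≤ c → ∀ z, s (c • z) = c * s z := by
    intro c hc z
    have h1 : t (c • z) ^ 2 + ‖c • z‖ ^ 2 = c ^ 2 * (t z ^ 2 + ‖z‖ ^ 2) := by
      rw [ht_smul c z, norm_smul, Real.norm_eq_abs, abs_of_nonneg hc]; ring
    have h2 : s (c • z) = Real.sqrt (t (c • z) ^ 2 + ‖c • z‖ ^ 2) := rfl
    have h3 : s z = Real.sqrt (t z ^ 2 + ‖z‖ ^ 2) := rfl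
    rw [h2, h1, Real.sqrt_mul (sq_nonneg c), Real.sqrt_sq hc, h3]
  have hs_add : ∀ x y, s (x + y) ≤ s x + s y := by
    intro x y
    have hcs : t x * t y + ⟪x, y⟫ ≤ s x * s y := by
      have h1 : ⟪x, y⟫ ≤ ‖x‖ * ‖y‖ := real_inner_le_norm x y
      have h2 : t x * t y ≤ |t x| * |t y| := by
        rw [← abs_mul]; exact le_abs_self _
      have h3 : (|t x| * |t y| + ‖x‖ * ‖y‖) ^ 2 ≤ (s x * s y) ^ 2 := by
        rw [mul_pow, hs_sq, hs_sq]
        nlinarith [sq_nonneg (|t x| * ‖y‖ - |t y| * ‖x‖), sq_abs (t x), sq_abs (t y)]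
      have h4 : |t x| * |t y| + ‖x‖ * ‖y‖ ≤ s x * s y := by
        nlinarith [mul_nonneg (hs_nn x) (hs_nn y), abs_nonneg (t x), abs_nonneg (t y),
          norm_nonneg x, norm_nonneg y,
          mul_nonneg (abs_nonneg (t x)) (abs_nonneg (t y)),
          mul_nonneg (norm_nonneg x) (norm_nonneg y)]
      linarith
    have hsq : (s (x + y)) ^ 2 ≤ (s x + s y) ^ 2 := by
      rw [hs_sq, ht_add, norm_add_sq_real]
      nlinarith [hs_sq x, hs_sq y]
    nlinarith [hs_nn (x + y), hs_nn x, hs_nn y]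
  -- membership characterization
  have hnsq : ∀ (z : Evec n) (c : ℝ), ‖z + c • e‖ ^ 2 = ‖z‖ ^ 2 + 2 * c * ⟪z, e⟫ + c ^ 2 := by
    intro z c
    rw [norm_add_sq_real, real_inner_smul_right, norm_smul, Real.norm_eq_abs, he, mul_one,
      sq_abs]
    ring
  have hball : ∀ (z : Evec n) (ε : ℝ), ε = 1 ∨ ε = -1 →
      (‖z - (ε * a) • e‖ ≤ R ↔ s z ≤ 1 + ε * t z) := by
    intro z ε hε
    have hε2 : ε ^ 2 = 1 := by rcases hε with h | h <;> rw [h] <;> norm_num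
    have hnn := norm_nonneg (z - (ε * a) • e)
    have hsq : ‖z - (ε * a) • e‖ ^ 2 = ‖z‖ ^ 2 - 2 * ε * t z + a ^ 2 := by
      have h0 := hnsq z (-(ε * a))
      rw [neg_smul, ← sub_eq_add_neg] at h0
      have htz : t z = a * ⟪z, e⟫ := rfl
      rw [h0, htz]
      linear_combination a ^ 2 * hε2
    constructor
    · intro h
      have h2 : ‖z - (ε * a) • e‖ ^ 2 ≤ R ^ 2 := by nlinarith
      rw [hsq, hR2] at h2
      have hz2 : ‖z‖ ^ 2 ≤ 1 + 2 * ε * t z := by linarith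
      have htnn : 0 ≤ 1 + ε * t z := by nlinarith [sq_nonneg ‖z‖, sq_nonneg (ε * t z - 1)]
      have : (s z) ^ 2 ≤ (1 + ε * t z) ^ 2 := by
        rw [hs_sq]
        nlinarith [sq_nonneg (ε * t z), hε2]
      nlinarith [hs_nn z]
    · intro h
      have htnn : 0 ≤ 1 + ε * t z := le_trans (hs_nn z) h
      have h2 : (s z) ^ 2 ≤ (1 + ε * t z) ^ 2 := by nlinarith [hs_nn z]
      rw [hs_sq] at h2
      have hz2 : ‖z‖ ^ 2 ≤ 1 + 2 * ε * t z := by nlinarith [hε2]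
      have : ‖z - (ε * a) • e‖ ^ 2 ≤ R ^ 2 := by rw [hsq, hR2]; linarith
      nlinarith
  have hmem : ∀ z, z ∈ K ↔ |t z| + s z ≤ 1 := by
    intro z
    have hb1 := hball z (-1) (Or.inr rfl)
    have hb2 := hball z 1 (Or.inl rfl)
    rw [show ((-1 : ℝ) * a) • e = -(a • e) by rw [neg_mul, one_mul, neg_smul],
      sub_neg_eq_add] at hb1
    rw [one_mul, one_mul] at hb2
    rw [hK, mem_inter_iff, mem_closedBall, mem_closedBall, dist_eq_norm, dist_eq_norm,
      sub_neg_eq_add, hb1, hb2]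
    constructor
    · rintro ⟨h1, h2⟩
      rcases abs_cases (t z) with ⟨habs, _⟩ | ⟨habs, _⟩ <;> rw [habs] <;> linarith
    · intro h
      have h1 := le_abs_self (t z)
      have h2 := neg_abs_le (t z)
      exact ⟨by linarith, by linarith⟩
  -- the gauge formula
  have hGnn : ∀ z : Evec n, 0 ≤ |t z| + s z := fun z => by positivity
  have hG0 : ∀ z : Evec n, |t z| + s z = 0 → z = 0 := by
    intro z hz
    have := hnorm_le_s z
    have := abs_nonneg (t z)
    have : ‖z‖ ≤ 0 := by linarith
    simpa [norm_le_zero_iff] using this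
  have hGsmul : ∀ c : ℝ, 0 < c → ∀ z : Evec n, |t (c • z)| + s (c • z) = c * (|t z| + s z) := by
    intro c hc z
    rw [ht_smul, hs_smul c hc.le, abs_mul, abs_of_pos hc]; ring
  have hGauge : ∀ z, gauge K z = |t z| + s z := fun z =>
    gauge_eq_of_formula K (fun z => |t z| + s z) hGnn hG0 hmem hGsmul z
  -- identity: G² = ‖z‖² + 2|t|G
  have hid : ∀ z : Evec n, (|t z| + s z) ^ 2 = ‖z‖ ^ 2 + 2 * |t z| * (|t z| + s z) := by
    intro z
    have h1 := hs_sq z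
    have h2 := sq_abs (t z)
    nlinarith
  -- part (3): strong convexity of the squared gauge
  have main3 : ∀ x y : Evec n,
      gauge K ((2:ℝ)⁻¹ • (x + y)) ^ 2 ≤
        (gauge K x ^ 2 + gauge K y ^ 2) / 2 - ‖x - y‖ ^ 2 / 8 := by
    intro x y
    rw [hGauge, hGauge, hGauge]
    set m : Evec n := (2:ℝ)⁻¹ • (x + y) with hm
    have hpm : |t m| ≤ (|t x| + |t y|) / 2 := by
      rw [hm, ht_smul, ht_add, abs_mul]
      have : |(2:ℝ)⁻¹| = 2⁻¹ := by norm_num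
      rw [this]
      have := abs_add_le (t x) (t y)
      linarith
    have hsm : s m ≤ (s x + s y) / 2 := by
      rw [hm, hs_smul (2:ℝ)⁻¹ (by norm_num)]
      have := hs_add x y
      linarith
    have hmsq : ‖m‖ ^ 2 = (‖x‖ ^ 2 + ‖y‖ ^ 2) / 2 - ‖x - y‖ ^ 2 / 4 := by
      have hpar : ‖x + y‖ ^ 2 + ‖x - y‖ ^ 2 = 2 * ‖x‖ ^ 2 + 2 * ‖y‖ ^ 2 := by
        rw [norm_add_sq_real, norm_sub_sq_real]; ring
      have : ‖m‖ = 2⁻¹ * ‖x + y‖ := by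
        rw [hm, norm_smul, Real.norm_eq_abs]; norm_num
      rw [this]; nlinarith
    have hkey := key_scalar (|t x|) (|t y|) (s x) (s y) ‖x‖ ‖y‖ ‖x - y‖
      (abs_nonneg _) (abs_nonneg _) (norm_nonneg _) (norm_nonneg _)
      (hs_nn x) (hs_nn y)
      (by rw [hs_sq, sq_abs]) (by rw [hs_sq, sq_abs])
      (abs_norm_sub_norm_le x y)
    have hGmnn := hGnn m
    have hpmnn := abs_nonneg (t m)
    have hGm_le : |t m| + s m ≤ ((|t x| + s x) + (|t y| + s y)) / 2 := by linarith
    have hidm := hid m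
    have hidx := hid x
    have hidy := hid y
    nlinarith [mul_le_mul hpm hGm_le hGmnn (by positivity : (0:ℝ) ≤ (|t x| + |t y|) / 2),
      hs_nn x, hs_nn y, abs_nonneg (t x), abs_nonneg (t y)]
  refine ⟨?_, ?_, main3⟩
  · -- IsConvexBody
    refine ⟨?_, ?_, ?_⟩
    · rw [hK]
      exact (isCompact_closedBall _ _).inter_right Metric.isClosed_closedBall
    · rw [hK]
      exact (convex_closedBall _ _).inter (convex_closedBall _ _)
    · have hsub : Metric.ball (0 : Evec n) (R - a) ⊆ K := by
        intro z hz
        rw [mem_ball, dist_zero_right] at hz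
        rw [hK, mem_inter_iff, mem_closedBall, mem_closedBall, dist_eq_norm, dist_eq_norm]
        have hae : ‖a • e‖ = a := by
          rw [norm_smul, Real.norm_eq_abs, he, mul_one, abs_of_nonneg ha]
        constructor
        · calc ‖z - -(a • e)‖ = ‖z + a • e‖ := by rw [sub_neg_eq_add]
            _ ≤ ‖z‖ + ‖a • e‖ := norm_add_le _ _
            _ ≤ R := by rw [hae]; linarith
        · calc ‖z - a • e‖ ≤ ‖z‖ + ‖a • e‖ := norm_sub_le _ _
            _ ≤ R := by rw [hae]; linarith
      exact interior_maximal hsub isOpen_ball (mem_ball_self (by linarith))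
  · -- uniform convexity
    intro x y
    have h := main3 (x + y) (x - y)
    have hmx : (2:ℝ)⁻¹ • ((x + y) + (x - y)) = x := by
      rw [show (x + y) + (x - y) = (2:ℝ) • x by module]
      rw [smul_smul]; norm_num
    have hsub : (x + y) - (x - y) = (2:ℝ) • y := by module
    rw [hmx, hsub] at h
    have hny : ‖(2:ℝ) • y‖ = 2 * ‖y‖ := by
      rw [norm_smul, Real.norm_eq_abs]; norm_num
    rw [hny] at h
    -- bound c * (gauge K y)² ≤ ‖y‖²
    have hgy : gauge K y ≤ (a + R) * ‖y‖ := by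
      rw [hGauge]
      have h1 := ht_le y
      have h2 := hs_le y
      linarith
    have hgynn := gauge_nonneg (s := K) y
    have hgysq : gauge K y ^ 2 ≤ (a + R) ^ 2 * ‖y‖ ^ 2 := by
      nlinarith [norm_nonneg y, mul_nonneg (add_nonneg ha hRnn) (norm_nonneg y)]
    have hc : (R - a) ^ 2 * ((a + R) ^ 2) = 1 := by nlinarith
    have hcy : (R - a) ^ 2 * gauge K y ^ 2 ≤ ‖y‖ ^ 2 := by
      have h1 : (R - a) ^ 2 * gauge K y ^ 2 ≤ (R - a) ^ 2 * ((a + R) ^ 2 * ‖y‖ ^ 2) :=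
        mul_le_mul_of_nonneg_left hgysq (sq_nonneg _)
      calc (R - a) ^ 2 * gauge K y ^ 2 ≤ (R - a) ^ 2 * ((a + R) ^ 2 * ‖y‖ ^ 2) := h1
        _ = ((R - a) ^ 2 * (a + R) ^ 2) * ‖y‖ ^ 2 := by ring
        _ = ‖y‖ ^ 2 := by rw [hc, one_mul]
    nlinarith [h]
end
end

section
/- Let e ∈ ℝⁿ with |e| = 1, a ≥ 0, R = √(1 + a²), and K = B(−a·e, R) ∩ B(a·e, R). Then for every x ∈ ℝⁿ, the squared gauge of K satisfies the explicit formula j_K(x)² = 2a²(x·e)² + |x|² + 2a·|x·e|·√(a²(x·e)² + |x|²). -/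
open MeasureTheory Metric Set
open scoped RealInnerProductSpace

noncomputable section

open scoped Pointwise

private lemma le_of_sq_le_sq_aux {a b : ℝ} (h : a ^ 2 ≤ b ^ 2) (hb : 0 ≤ b) : a ≤ b := by
  calc a ≤ |a| := le_abs_self a
    _ = Real.sqrt (a ^ 2) := (Real.sqrt_sq_eq_abs a).symm
    _ ≤ Real.sqrt (b ^ 2) := Real.sqrt_le_sqrt h
    _ = b := Real.sqrt_sq hb

set_option maxHeartbeats 1000000 in
/-- Explicit formula for the squared gauge of `B(−ae, R) ∩ B(ae, R)` with `R = √(1+a²)`.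
Here `⟪x, e⟫` denotes the real inner product `x·e`. -/
theorem gauge_sq_ball_inter_formula {n : ℕ} (hn : 2 ≤ n)
    (e : Evec n) (he : ‖e‖ = 1) (a : ℝ) (ha : 0 ≤ a)
    (R : ℝ) (hR : R = Real.sqrt (1 + a ^ 2))
    (K : Set (Evec n)) (hK : K = closedBall (-(a • e)) R ∩ closedBall (a • e) R) :
    ∀ x : Evec n,
      gauge K x ^ 2 =
        2 * a ^ 2 * ⟪x, e⟫ ^ 2 + ‖x‖ ^ 2 +
          2 * a * |⟪x, e⟫| * Real.sqrt (a ^ 2 * ⟪x, e⟫ ^ 2 + ‖x‖ ^ 2) := by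
  have hR0 : 0 ≤ R := hR ▸ Real.sqrt_nonneg _
  have hR2 : R ^ 2 = 1 + a ^ 2 := by
    rw [hR, Real.sq_sqrt]; positivity
  intro x
  rcases eq_or_ne x 0 with rfl | hx
  · simp [gauge_zero]
  set t : ℝ := ⟪x, e⟫ with ht
  set s : ℝ := Real.sqrt (a ^ 2 * t ^ 2 + ‖x‖ ^ 2) with hs
  have hs0 : 0 ≤ s := Real.sqrt_nonneg _
  have hs2 : s ^ 2 = a ^ 2 * t ^ 2 + ‖x‖ ^ 2 := by
    rw [hs, Real.sq_sqrt]; positivity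
  clear_value t s
  have hxn : 0 < ‖x‖ := norm_pos_iff.mpr hx
  have hspos : 0 < s := by nlinarith
  have hu : 0 ≤ a * |t| := mul_nonneg ha (abs_nonneg t)
  set r₀ : ℝ := a * |t| + s with hr₀
  clear_value r₀
  have hr₀pos : 0 < r₀ := by rw [hr₀]; positivity
  -- membership characterization
  have mem_iff : ∀ r : ℝ, 0 < r →
      (x ∈ (r • K : Set (Evec n)) ↔ ‖x‖ ^ 2 + 2 * (a * |t|) * r ≤ r ^ 2) := by
    intro r hr
    have hrR : 0 ≤ r * R := mul_nonneg hr.le hR0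
    rw [hK, mem_smul_set_iff_inv_smul_mem₀ hr.ne', Set.mem_inter_iff, mem_closedBall,
      mem_closedBall, dist_eq_norm, dist_eq_norm, sub_neg_eq_add]
    have e1 : r⁻¹ • x + a • e = r⁻¹ • (x + r • (a • e)) := by
      rw [smul_add, inv_smul_smul₀ hr.ne']
    have e2 : r⁻¹ • x - a • e = r⁻¹ • (x - r • (a • e)) := by
      rw [smul_sub, inv_smul_smul₀ hr.ne']
    have hns : ∀ z : Evec n, (‖r⁻¹ • z‖ ≤ R ↔ ‖z‖ ≤ r * R) := by
      intro z
      rw [norm_smul, Real.norm_eq_abs, abs_of_pos (inv_pos.mpr hr), inv_mul_le_iff₀ hr]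
    rw [e1, e2, hns, hns]
    have hip : ⟪x, r • (a • e)⟫ = r * (a * t) := by
      rw [real_inner_smul_right, real_inner_smul_right, ← ht]
    have hre : ‖r • (a • e)‖ ^ 2 = r ^ 2 * a ^ 2 := by
      rw [norm_smul, norm_smul, he, mul_one, mul_pow, Real.norm_eq_abs, Real.norm_eq_abs,
        sq_abs, sq_abs]
    have h1 : ‖x + r • (a • e)‖ ^ 2 = ‖x‖ ^ 2 + 2 * r * (a * t) + r ^ 2 * a ^ 2 := by
      rw [norm_add_sq_real, hip, hre]; ring
    have h2 : ‖x - r • (a • e)‖ ^ 2 = ‖x‖ ^ 2 - 2 * r * (a * t) + r ^ 2 * a ^ 2 := by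
      rw [norm_sub_sq_real, hip, hre]; ring
    have hrR2 : (r * R) ^ 2 = r ^ 2 + r ^ 2 * a ^ 2 := by rw [mul_pow, hR2]; ring
    constructor
    · rintro ⟨hA, hB⟩
      have hA2 : ‖x + r • (a • e)‖ ^ 2 ≤ (r * R) ^ 2 :=
        pow_le_pow_left₀ (norm_nonneg _) hA 2
      have hB2 : ‖x - r • (a • e)‖ ^ 2 ≤ (r * R) ^ 2 :=
        pow_le_pow_left₀ (norm_nonneg _) hB 2
      rw [h1, hrR2] at hA2
      rw [h2, hrR2] at hB2
      rcases abs_cases t with ⟨hT, _⟩ | ⟨hT, _⟩ <;> rw [hT] <;> linarith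
    · intro h
      have habs : 2 * r * (a * |t|) ≤ r ^ 2 - ‖x‖ ^ 2 := by linarith
      have hx1 : 2 * r * (a * t) ≤ 2 * r * (a * |t|) := by
        nlinarith [mul_nonneg (mul_nonneg hr.le ha) (sub_nonneg.mpr (le_abs_self t))]
      have hx2 : -(2 * r * (a * t)) ≤ 2 * r * (a * |t|) := by
        nlinarith [mul_nonneg (mul_nonneg hr.le ha) (sub_nonneg.mpr (neg_abs_le t))]
      constructor
      · exact le_of_sq_le_sq_aux (by rw [h1, hrR2]; linarith) hrR
      · exact le_of_sq_le_sq_aux (by rw [h2, hrR2]; linarith) hrR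
  have hset : {r : ℝ | 0 < r ∧ x ∈ r • K} = Set.Ici r₀ := by
    ext r
    simp only [Set.mem_setOf_eq, Set.mem_Ici]
    constructor
    · rintro ⟨hr, hmem⟩
      have h := (mem_iff r hr).mp hmem
      clear hmem mem_iff hK
      have hD : 0 < r - a * |t| := by nlinarith
      have hDs : s ≤ r - a * |t| :=
        le_of_sq_le_sq_aux (by nlinarith [sq_abs t]) hD.le
      rw [hr₀]; linarith
    · intro h
      have hr : 0 < r := lt_of_lt_of_le hr₀pos h
      refine ⟨hr, (mem_iff r hr).mpr ?_⟩
      clear mem_iff hK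
      have hD : s ≤ r - a * |t| := by rw [hr₀] at h; linarith
      nlinarith [sq_abs t, mul_self_le_mul_self hs0 hD]
  have hg : gauge K x = r₀ := by
    rw [gauge, hset, csInf_Ici]
  rw [hg, hr₀]
  linear_combination hs2 + a ^ 2 * sq_abs t
end
end

section
/- Let e ∈ ℝⁿ with |e| = 1, a ≥ 0, R = √(1 + a²), and K = B(−a·e, R) ∩ B(a·e, R). Then the function x ↦ j_K(x)² − |x|²/2 is convex on ℝⁿ (equivalently, the distributional Hessian of j_K² is bounded below by the identity matrix). -/
open MeasureTheory Metric Set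

open scoped RealInnerProductSpace Pointwise

noncomputable section

lemma my_cs2 {E : Type*} [NormedAddCommGroup E] [InnerProductSpace ℝ E]
    (α β : ℝ) (u v : E) :
    (α*β + ⟪u, v⟫)^2 ≤ (α^2 + ‖u‖^2) * (β^2 + ‖v‖^2) := by
  have h := abs_real_inner_le_norm u v
  have h1 : (0:ℝ) ≤ ‖u‖*‖v‖ - ⟪u, v⟫ := by cases abs_le.mp h; linarith
  have h2 : (0:ℝ) ≤ ‖u‖*‖v‖ + ⟪u, v⟫ := by cases abs_le.mp h; linarith
  rcases eq_or_lt_of_le (mul_nonneg (norm_nonneg u) (norm_nonneg v)) with hAB | hAB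
  · have hip : ⟪u, v⟫ = 0 := by rw [← hAB] at h1 h2; linarith
    rw [hip]
    nlinarith [sq_nonneg α, sq_nonneg β, sq_nonneg (‖u‖*‖v‖), norm_nonneg u, norm_nonneg v,
      sq_nonneg (α*‖v‖-β*‖u‖), sq_nonneg (α*‖v‖+β*‖u‖)]
  · nlinarith [mul_nonneg h1 (sq_nonneg (α*‖v‖+β*‖u‖)), mul_nonneg h2 (sq_nonneg (α*‖v‖-β*‖u‖)),
      mul_nonneg (mul_nonneg h1 h2) hAB.le, hAB]

lemma my_abs_le_of_sq_le_sq {x y : ℝ} (h : x^2 ≤ y^2) (hy : 0 ≤ y) : |x| ≤ y := by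
  nlinarith [abs_nonneg x, sq_abs x]

set_option maxHeartbeats 2000000 in
lemma my_key (a l m t1 t2 q1 q2 c tm qm s1 s2 qv w1 w2 wm : ℝ)
    (ha : 0 ≤ a) (hl : 0 ≤ l) (hm : 0 ≤ m) (hs : l + m = 1)
    (htm : tm = l*t1 + m*t2)
    (hqm : qm = l^2*q1 + 2*(l*m)*c + m^2*q2)
    (hs1 : s1 = l*q1 + m*c) (hs2 : s2 = l*c + m*q2)
    (hqv : qv = q1 + q2 - 2*c)
    (hq1 : 0 ≤ q1) (hq2 : 0 ≤ q2) (hqm0 : 0 ≤ qm) (hqv0 : 0 ≤ qv)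
    (hw1 : 0 ≤ w1) (hw2 : 0 ≤ w2) (hwm : 0 ≤ wm)
    (e1 : w1^2 = a^2*t1^2 + q1) (e2 : w2^2 = a^2*t2^2 + q2) (em : wm^2 = a^2*tm^2 + qm)
    (hc1 : (a^2*t1*tm + s1)^2 ≤ w1^2 * wm^2)
    (hc2 : (a^2*t2*tm + s2)^2 ≤ w2^2 * wm^2)
    (hcv : (s1 - s2)^2 ≤ qv * qm) :
    2*a*|tm| *wm + qm/2 + 2*a^2*tm^2 ≤
      l*(2*a*|t1| *w1 + q1/2 + 2*a^2*t1^2) + m*(2*a*|t2| *w2 + q2/2 + 2*a^2*t2^2) := by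
  have hm2 : m = 1 - l := by linarith
  subst hm2 htm hqm hs1 hs2 hqv
  set m : ℝ := 1 - l with hmdef
  set tm : ℝ := l*t1 + m*t2 with htm
  set qm : ℝ := l^2*q1 + 2*(l*m)*c + m^2*q2 with hqm
  set s1 : ℝ := l*q1 + m*c with hs1
  set s2 : ℝ := l*c + m*q2 with hs2
  set qv : ℝ := q1 + q2 - 2*c with hqv
  clear_value m tm qm s1 s2 qv
  rcases eq_or_lt_of_le hwm with hwm0 | hwmpos
  · -- wm = 0 : lhs vanishes
    have h0 : a^2*tm^2 + qm = 0 := by rw [← em, ← hwm0]; ring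
    clear em hc1 hc2 hcv e1 e2
    have hsq : 0 ≤ a^2*tm^2 := by positivity
    have h1 : a^2*tm^2 = 0 := by linarith
    have h2 : qm = 0 := by linarith
    have habs0 : a*|tm| = 0 := by
      have hh : (a*|tm|)^2 = 0 := by rw [mul_pow, sq_abs]; linarith [h1]
      have := mul_nonneg ha (abs_nonneg tm)
      nlinarith [hh, this]
    rw [h2, ← hwm0]
    have r1 : 0 ≤ 2*a*|t1| *w1 + q1/2 + 2*a^2*t1^2 := by positivity
    have r2 : 0 ≤ 2*a*|t2| *w2 + q2/2 + 2*a^2*t2^2 := by positivity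
    have k1 := mul_nonneg hl r1
    have k2 := mul_nonneg hm r2
    nlinarith [k1, k2, h1]
  · -- wm > 0
    set σ : ℝ := if 0 ≤ tm then 1 else -1 with hσdef
    have habs : σ * tm = |tm| := by
      rw [hσdef]; split_ifs with h
      · rw [abs_of_nonneg h]; ring
      · rw [abs_of_neg (lt_of_not_ge h)]; ring
    have hσ2 : σ^2 = 1 := by rw [hσdef]; split_ifs <;> norm_num
    have hσabs : |σ| = 1 := by rw [hσdef]; split_ifs <;> norm_num
    clear_value σ
    clear hσdef
    -- pointwise inequalities
    have habsle1 : |a^2*t1*tm + s1| ≤ w1*wm :=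
      my_abs_le_of_sq_le_sq (by rw [mul_pow]; exact hc1) (mul_nonneg hw1 hwm)
    have habsle2 : |a^2*t2*tm + s2| ≤ w2*wm :=
      my_abs_le_of_sq_le_sq (by rw [mul_pow]; exact hc2) (mul_nonneg hw2 hwm)
    have h1 : 2*a*(a^2*(σ*tm)*t1^2 + σ*t1*s1) ≤ 2*a*(|t1| *(w1*wm)) := by
      have step : σ*t1*(a^2*tm*t1 + s1) ≤ |t1| *(w1*wm) := by
        calc σ*t1*(a^2*tm*t1 + s1) ≤ |σ*t1*(a^2*tm*t1 + s1)| := le_abs_self _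
        _ = |t1| * |a^2*t1*tm + s1| := by
            rw [abs_mul, abs_mul, hσabs, one_mul]; ring_nf
        _ ≤ |t1| *(w1*wm) := mul_le_mul_of_nonneg_left habsle1 (abs_nonneg t1)
      have : a^2*(σ*tm)*t1^2 + σ*t1*s1 = σ*t1*(a^2*tm*t1 + s1) := by ring
      rw [this]
      exact mul_le_mul_of_nonneg_left step (by linarith)
    have h2 : 2*a*(a^2*(σ*tm)*t2^2 + σ*t2*s2) ≤ 2*a*(|t2| *(w2*wm)) := by
      have step : σ*t2*(a^2*tm*t2 + s2) ≤ |t2| *(w2*wm) := by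
        calc σ*t2*(a^2*tm*t2 + s2) ≤ |σ*t2*(a^2*tm*t2 + s2)| := le_abs_self _
        _ = |t2| * |a^2*t2*tm + s2| := by
            rw [abs_mul, abs_mul, hσabs, one_mul]; ring_nf
        _ ≤ |t2| *(w2*wm) := mul_le_mul_of_nonneg_left habsle2 (abs_nonneg t2)
      have : a^2*(σ*tm)*t2^2 + σ*t2*s2 = σ*t2*(a^2*tm*t2 + s2) := by ring
      rw [this]
      exact mul_le_mul_of_nonneg_left step (by linarith)
    -- convexity of the quadratic: B ≥ 0
    have hqmwm : qm ≤ wm^2 := by rw [em]; exact le_add_of_nonneg_left (by positivity)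
    have hY2 : (σ*(s1-s2))^2 ≤ qv*qm := by
      have : (σ*(s1-s2))^2 = σ^2*(s1-s2)^2 := by ring
      rw [this, hσ2, one_mul]; exact hcv
    have hZ2 : (2*a*(t1-t2)*(σ*(s1-s2)))^2
        ≤ 4*(2*a^2*wm*(t1-t2)^2)*(qv*wm/2) := by
      have hq : qv*qm ≤ qv*wm^2 := mul_le_mul_of_nonneg_left hqmwm hqv0
      calc (2*a*(t1-t2)*(σ*(s1-s2)))^2 = (2*a*(t1-t2))^2 * (σ*(s1-s2))^2 := by ring
        _ ≤ (2*a*(t1-t2))^2 * (qv*wm^2) :=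
            mul_le_mul_of_nonneg_left (le_trans hY2 hq) (sq_nonneg _)
        _ = 4*(2*a^2*wm*(t1-t2)^2)*(qv*wm/2) := by ring
    have hZabs : |2*a*(t1-t2)*(σ*(s1-s2))| ≤ 2*a^2*wm*(t1-t2)^2 + qv*wm/2 := by
      apply my_abs_le_of_sq_le_sq
      · linarith [hZ2, sq_nonneg (2*a^2*wm*(t1-t2)^2 - qv*wm/2)]
      · have h1' : 0 ≤ 2*a^2*wm*(t1-t2)^2 := by positivity
        have h2' : 0 ≤ qv*wm := mul_nonneg hqv0 hwm
        linarith
    have hE : 0 ≤ 2*a^3*(σ*tm)*(t1-t2)^2 := by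
      rw [habs]
      have : 0 ≤ a^3 := by positivity
      positivity
    have h3 : 0 ≤ 2*a^2*wm*(t1-t2)^2 + 2*a^3*(σ*tm)*(t1-t2)^2 + qv*wm/2
        + 2*a*(t1-t2)*(σ*(s1-s2)) := by
      have := neg_abs_le (2*a*(t1-t2)*(σ*(s1-s2)))
      linarith
    -- combine
    rw [← habs, ← mul_le_mul_iff_of_pos_right hwmpos]
    have hid : (l*(2*a*|t1| *w1 + q1/2 + 2*a^2*t1^2) + m*(2*a*|t2| *w2 + q2/2 + 2*a^2*t2^2))*wm
        - (2*a*(σ*tm)*wm + qm/2 + 2*a^2*tm^2)*wm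
        = l*(2*a*(|t1| *(w1*wm)) - 2*a*(a^2*(σ*tm)*t1^2 + σ*t1*s1))
        + m*(2*a*(|t2| *(w2*wm)) - 2*a*(a^2*(σ*tm)*t2^2 + σ*t2*s2))
        + l*m*(2*a^2*wm*(t1-t2)^2 + 2*a^3*(σ*tm)*(t1-t2)^2 + qv*wm/2
            + 2*a*(t1-t2)*(σ*(s1-s2)))
        - 2*a*σ*tm*(wm^2 - (a^2*tm^2 + qm)) := by
      rw [htm, hqm, hs1, hs2, hqv, hmdef]; ring
    have hem0 : wm^2 - (a^2*tm^2 + qm) = 0 := by rw [em]; ring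
    have k1 := mul_nonneg hl (sub_nonneg.mpr h1)
    have k2 := mul_nonneg hm (sub_nonneg.mpr h2)
    have k3 := mul_nonneg (mul_nonneg hl hm) h3
    rw [hem0] at hid
    linarith [hid, k1, k2, k3]

lemma my_sq_le_iff {u R : ℝ} (hu : 0 ≤ u) (hR : 0 ≤ R) : u ≤ R ↔ u^2 ≤ R^2 := by
  constructor
  · intro h; exact pow_le_pow_left₀ hu h 2
  · intro h; nlinarith

lemma my_sqrt_iff (b q r : ℝ) (hb : 0 ≤ b) (hq : 0 ≤ q) (hr : 0 < r) :
    b + Real.sqrt (b^2 + q) ≤ r ↔ q + 2*b*r ≤ r^2 := by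
  have hbq : (0:ℝ) ≤ b^2 + q := by positivity
  have hs := Real.sq_sqrt hbq
  have hs0 := Real.sqrt_nonneg (b^2 + q)
  constructor
  · intro h; nlinarith
  · intro h
    have hbr : b ≤ r := by nlinarith
    have h2 : b^2 + q ≤ (r - b)^2 := by nlinarith
    have := Real.sqrt_le_sqrt h2
    rw [Real.sqrt_sq (by linarith)] at this
    linarith

lemma my_K_eq {E : Type*} [NormedAddCommGroup E] [InnerProductSpace ℝ E]
    (e : E) (he : ‖e‖ = 1) (a : ℝ) (ha : 0 ≤ a) (R : ℝ) (hR : R = Real.sqrt (1 + a^2)) :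
    closedBall (-(a • e)) R ∩ closedBall (a • e) R
      = {z : E | ‖z‖^2 + 2*a*|⟪z, e⟫| ≤ 1} := by
  have hR0 : 0 ≤ R := hR ▸ Real.sqrt_nonneg _
  have hR2 : R^2 = 1 + a^2 := by rw [hR]; exact Real.sq_sqrt (by positivity)
  ext z
  simp only [mem_inter_iff, mem_closedBall, dist_eq_norm, mem_setOf_eq, sub_neg_eq_add]
  have h1 : ‖z + a • e‖^2 = ‖z‖^2 + 2*a*⟪z, e⟫ + a^2 := by
    rw [norm_add_sq_real, real_inner_smul_right, norm_smul, he, Real.norm_eq_abs,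
      abs_of_nonneg ha]
    ring
  have h2 : ‖z - a • e‖^2 = ‖z‖^2 - 2*a*⟪z, e⟫ + a^2 := by
    rw [norm_sub_sq_real, real_inner_smul_right, norm_smul, he, Real.norm_eq_abs,
      abs_of_nonneg ha]
    ring
  rw [my_sq_le_iff (norm_nonneg _) hR0, my_sq_le_iff (norm_nonneg _) hR0, h1, h2, hR2]
  rcases abs_cases (⟪z, e⟫ : ℝ) with ⟨hc, hsign⟩ | ⟨hc, hsign⟩ <;> rw [hc] <;>
    constructor <;> intro h
  · linarith [h.1, h.2]
  · constructor <;> nlinarith [mul_nonneg ha hsign, h]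
  · linarith [h.1, h.2]
  · constructor <;> nlinarith [mul_nonneg ha (neg_nonneg.mpr hsign.le), h]

lemma my_gauge_formula {E : Type*} [NormedAddCommGroup E] [InnerProductSpace ℝ E]
    (e : E) (a : ℝ) (ha : 0 ≤ a)
    (K : Set E) (hK : K = {z : E | ‖z‖^2 + 2*a*|⟪z, e⟫| ≤ 1}) (x : E) :
    gauge K x = a * |⟪x, e⟫| + Real.sqrt (a^2*⟪x, e⟫^2 + ‖x‖^2) := by
  have hmemK : ∀ z : E, z ∈ K ↔ ‖z‖^2 + 2*a*|⟪z, e⟫| ≤ 1 := by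
    intro z; rw [hK]; exact Iff.rfl
  by_cases hx : x = 0
  · subst hx
    simp [gauge_zero]
  · have hq : (0:ℝ) < ‖x‖ := norm_pos_iff.mpr hx
    set t : ℝ := ⟪x, e⟫ with ht
    set φ : ℝ := a * |t| + Real.sqrt (a^2*t^2 + ‖x‖^2) with hφ
    have hsqge : ‖x‖ ≤ Real.sqrt (a^2*t^2 + ‖x‖^2) := by
      have h1 : ‖x‖^2 ≤ a^2*t^2 + ‖x‖^2 := by nlinarith [sq_nonneg (a*t)]
      calc ‖x‖ = Real.sqrt (‖x‖^2) := (Real.sqrt_sq (norm_nonneg x)).symm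
        _ ≤ Real.sqrt (a^2*t^2 + ‖x‖^2) := Real.sqrt_le_sqrt h1
    have hφpos : 0 < φ := by
      have : 0 ≤ a * |t| := mul_nonneg ha (abs_nonneg t)
      rw [hφ]
      calc (0:ℝ) < ‖x‖ := hq
        _ ≤ Real.sqrt (a^2*t^2 + ‖x‖^2) := hsqge
        _ ≤ _ := by linarith
    have hmem : ∀ r : ℝ, 0 < r → (x ∈ r • K ↔ φ ≤ r) := by
      intro r hr
      rw [mem_smul_set_iff_inv_smul_mem₀ hr.ne', hmemK]
      simp only [norm_smul, inner_smul_left, RCLike.conj_to_real]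
      have hrinv : (0:ℝ) ≤ r⁻¹ := inv_nonneg.mpr hr.le
      rw [Real.norm_eq_abs, abs_of_nonneg hrinv, abs_mul, abs_of_nonneg hrinv]
      have key : (r⁻¹*‖x‖)^2 + 2*a*(r⁻¹*|t|) ≤ 1 ↔ ‖x‖^2 + 2*(a*|t|)*r ≤ r^2 := by
        rw [mul_pow]
        constructor <;> intro h
        · have := mul_le_mul_of_nonneg_left h (le_of_lt (mul_pos hr hr))
          have hr2 : r * r * (r⁻¹^2 * ‖x‖^2) = ‖x‖^2 := by
            field_simp
          have hr3 : r * r * (2*a*(r⁻¹*|t|)) = 2*a*|t| *r := by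
            field_simp
          nlinarith [this]
        · have := mul_le_mul_of_nonneg_left h (by positivity : (0:ℝ) ≤ r⁻¹^2)
          have hr2 : r⁻¹^2 * (‖x‖^2 + 2*(a*|t|)*r) = r⁻¹^2*‖x‖^2 + 2*a*(r⁻¹*|t|)*(r⁻¹*r) := by
            ring
          have hr4 : r⁻¹*r = 1 := inv_mul_cancel₀ hr.ne'
          have hr5 : r⁻¹^2 * r^2 = 1 := by
            rw [← mul_pow, hr4]; norm_num
          nlinarith [this]
      rw [key, ← my_sqrt_iff (a*|t|) (‖x‖^2) r (mul_nonneg ha (abs_nonneg t)) (by positivity) hr]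
      rw [hφ]
      have : (a*|t|)^2 = a^2*t^2 := by rw [mul_pow, sq_abs]
      rw [this]
    have hset : {r : ℝ | 0 < r ∧ x ∈ r • K} = Ici φ := by
      ext r
      simp only [mem_setOf_eq, mem_Ici]
      constructor
      · rintro ⟨hr, hm⟩; exact (hmem r hr).1 hm
      · intro hr
        have hr0 : 0 < r := lt_of_lt_of_le hφpos hr
        exact ⟨hr0, (hmem r hr0).2 hr⟩
    unfold gauge
    rw [hset, csInf_Ici]

/-- The squared gauge of `B(−ae, R) ∩ B(ae, R)` with `R = √(1+a²)` is `1`-strongly convex: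
`x ↦ j_K(x)² − |x|²/2` is convex on `ℝⁿ`. -/
theorem gauge_sq_strongly_convex {n : ℕ} (hn : 2 ≤ n)
    (e : Evec n) (he : ‖e‖ = 1) (a : ℝ) (ha : 0 ≤ a)
    (R : ℝ) (hR : R = Real.sqrt (1 + a ^ 2))
    (K : Set (Evec n)) (hK : K = closedBall (-(a • e)) R ∩ closedBall (a • e) R) :
    ConvexOn ℝ Set.univ (fun x : Evec n => gauge K x ^ 2 - ‖x‖ ^ 2 / 2) := by
  have hKset : K = {z : Evec n | ‖z‖^2 + 2*a*|⟪z, e⟫| ≤ 1} := by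
    rw [hK]; exact my_K_eq e he a ha R hR
  have hg : ∀ x : Evec n, gauge K x = a * |⟪x, e⟫| + Real.sqrt (a^2*⟪x, e⟫^2 + ‖x‖^2) :=
    my_gauge_formula e a ha K hKset
  have hfun : (fun x : Evec n => gauge K x ^ 2 - ‖x‖ ^ 2 / 2)
      = fun x : Evec n => 2*a*|⟪x, e⟫| * Real.sqrt (a^2*⟪x, e⟫^2 + ‖x‖^2)
          + ‖x‖^2/2 + 2*a^2*⟪x, e⟫^2 := by
    funext x
    rw [hg x]
    have hs := Real.sq_sqrt (show (0:ℝ) ≤ a^2*⟪x, e⟫^2 + ‖x‖^2 by positivity)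
    have habs : |⟪x, e⟫|^2 = (⟪x, e⟫:ℝ)^2 := sq_abs _
    linear_combination a^2*habs + hs
  rw [hfun]
  refine ⟨convex_univ, fun x _ y _ l mu hl hmu hlm => ?_⟩
  simp only [smul_eq_mul]
  set mv : Evec n := l • x + mu • y with hmv
  set t1 : ℝ := ⟪x, e⟫ with ht1
  set t2 : ℝ := ⟪y, e⟫ with ht2
  set c : ℝ := ⟪x, y⟫ with hc
  have htm : (⟪mv, e⟫:ℝ) = l*t1 + mu*t2 := by
    rw [hmv, inner_add_left, real_inner_smul_left, real_inner_smul_left]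
  have hqm : ‖mv‖^2 = l^2*‖x‖^2 + 2*(l*mu)*c + mu^2*‖y‖^2 := by
    rw [hmv, norm_add_sq_real, norm_smul, norm_smul, real_inner_smul_left,
      real_inner_smul_right, Real.norm_eq_abs, Real.norm_eq_abs,
      abs_of_nonneg hl, abs_of_nonneg hmu, hc]
    ring
  have hs1 : (⟪x, mv⟫:ℝ) = l*‖x‖^2 + mu*c := by
    rw [hmv, inner_add_right, real_inner_smul_right, real_inner_smul_right,
      real_inner_self_eq_norm_sq, hc]
  have hs2 : (⟪y, mv⟫:ℝ) = l*c + mu*‖y‖^2 := by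
    rw [hmv, inner_add_right, real_inner_smul_right, real_inner_smul_right,
      real_inner_self_eq_norm_sq, hc, real_inner_comm]
  have hqv : ‖x - y‖^2 = ‖x‖^2 + ‖y‖^2 - 2*c := by
    rw [norm_sub_sq_real, hc]; ring
  have hc1 : (a^2*t1*⟪mv, e⟫ + ⟪x, mv⟫)^2
      ≤ (Real.sqrt (a^2*t1^2 + ‖x‖^2))^2 * (Real.sqrt (a^2*⟪mv, e⟫^2 + ‖mv‖^2))^2 := by
    rw [Real.sq_sqrt (by positivity), Real.sq_sqrt (by positivity)]
    calc (a^2*t1*⟪mv, e⟫ + ⟪x, mv⟫)^2 = ((a*t1)*(a*⟪mv, e⟫) + ⟪x, mv⟫)^2 := by ring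
      _ ≤ ((a*t1)^2 + ‖x‖^2) * ((a*⟪mv, e⟫)^2 + ‖mv‖^2) := my_cs2 (a*t1) (a*⟪mv, e⟫) x mv
      _ = (a^2*t1^2 + ‖x‖^2) * (a^2*⟪mv, e⟫^2 + ‖mv‖^2) := by ring
  have hc2 : (a^2*t2*⟪mv, e⟫ + ⟪y, mv⟫)^2
      ≤ (Real.sqrt (a^2*t2^2 + ‖y‖^2))^2 * (Real.sqrt (a^2*⟪mv, e⟫^2 + ‖mv‖^2))^2 := by
    rw [Real.sq_sqrt (by positivity), Real.sq_sqrt (by positivity)]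
    calc (a^2*t2*⟪mv, e⟫ + ⟪y, mv⟫)^2 = ((a*t2)*(a*⟪mv, e⟫) + ⟪y, mv⟫)^2 := by ring
      _ ≤ ((a*t2)^2 + ‖y‖^2) * ((a*⟪mv, e⟫)^2 + ‖mv‖^2) := my_cs2 (a*t2) (a*⟪mv, e⟫) y mv
      _ = (a^2*t2^2 + ‖y‖^2) * (a^2*⟪mv, e⟫^2 + ‖mv‖^2) := by ring
  have hcv : ((⟪x, mv⟫:ℝ) - ⟪y, mv⟫)^2 ≤ ‖x - y‖^2 * ‖mv‖^2 := by
    have h := real_inner_mul_inner_self_le (x - y) mv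
    rw [real_inner_self_eq_norm_sq, real_inner_self_eq_norm_sq, inner_sub_left] at h
    calc ((⟪x, mv⟫:ℝ) - ⟪y, mv⟫)^2
        = ((⟪x, mv⟫:ℝ) - ⟪y, mv⟫) * ((⟪x, mv⟫:ℝ) - ⟪y, mv⟫) := by ring
      _ ≤ ‖x - y‖^2 * ‖mv‖^2 := h
  exact my_key a l mu t1 t2 (‖x‖^2) (‖y‖^2) c (⟪mv, e⟫) (‖mv‖^2) (⟪x, mv⟫) (⟪y, mv⟫)
    (‖x - y‖^2)
    (Real.sqrt (a^2*t1^2 + ‖x‖^2)) (Real.sqrt (a^2*t2^2 + ‖y‖^2))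
    (Real.sqrt (a^2*⟪mv, e⟫^2 + ‖mv‖^2))
    ha hl hmu hlm htm (by rw [hqm]) hs1 hs2 hqv
    (sq_nonneg _) (sq_nonneg _) (sq_nonneg _) (sq_nonneg _)
    (Real.sqrt_nonneg _) (Real.sqrt_nonneg _) (Real.sqrt_nonneg _)
    (Real.sq_sqrt (by positivity)) (Real.sq_sqrt (by positivity))
    (Real.sq_sqrt (by positivity))
    hc1 hc2 hcv
end
end

section
/- Let n ≥ 2. For every v ∈ ℝⁿ and every M ∈ 𝒮ⁿ₀ there exists q ∈ ℝ and a pair (c,ξ) ∈ ℝ×ℝⁿ with (c,ξ) ≠ (0,0) such that c·v + (M + q·Iₙ)·ξ = 0 and v·ξ = 0; equivalently, there exists q ∈ ℝ such that the determinant of the (n+1)×(n+1) block matrix with first column (v,0), upper-right block M + q·Iₙ and bottom-right row vᵀ vanishes, i.e. (v,M,q) belongs to the wave cone Λ of the linear subsolution system. -/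
open MeasureTheory Metric Set
open scoped RealInnerProductSpace

noncomputable section

section Aux

variable {n : ℕ}

/-- The linear map given by matrix multiplication, on Euclidean space. -/
def mulVecL (M : Matrix (Fin n) (Fin n) ℝ) : Evec n →ₗ[ℝ] Evec n where
  toFun x := WithLp.toLp 2 (fun i => ∑ j, M i j * x j : Fin n → ℝ)
  map_add' x y := by
    ext i
    simp [mul_add, Finset.sum_add_distrib]
  map_smul' c x := by
    ext i
    simp [Finset.mul_sum, mul_left_comm]

lemma mulVecL_apply (M : Matrix (Fin n) (Fin n) ℝ) (x : Evec n) (i : Fin n) :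
    mulVecL M x i = ∑ j, M i j * x j := rfl

lemma inner_mulVecL (M : Matrix (Fin n) (Fin n) ℝ) (hMs : M.IsSymm) (x y : Evec n) :
    ⟪mulVecL M x, y⟫ = ⟪x, mulVecL M y⟫ := by
  simp only [PiLp.inner_apply, RCLike.inner_apply, conj_trivial, mulVecL_apply,
    Finset.sum_mul, Finset.mul_sum]
  rw [Finset.sum_comm]
  refine Finset.sum_congr rfl fun j _ => Finset.sum_congr rfl fun i _ => ?_
  rw [hMs.apply i j]
  ring

/-- Inner product of an orthogonal projection against a member of the subspace. -/
lemma proj_inner {E : Type*} [NormedAddCommGroup E] [InnerProductSpace ℝ E]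
    (K : Submodule ℝ E) [Submodule.HasOrthogonalProjection K] (w y : E) (hy : y ∈ K) :
    ⟪(Submodule.orthogonalProjectionOnto K w : E), y⟫ = ⟪w, y⟫ := by
  have h0 : ⟪y, w - (Submodule.orthogonalProjectionOnto K w : E)⟫ = 0 :=
    (Submodule.sub_starProjection_mem_orthogonal (K := K) w) y hy
  rw [inner_sub_right] at h0
  have h1 : ⟪y, (Submodule.orthogonalProjectionOnto K w : E)⟫ = ⟪y, w⟫ := (sub_eq_zero.mp h0).symm
  calc ⟪(Submodule.orthogonalProjectionOnto K w : E), y⟫ = ⟪y, (Submodule.orthogonalProjectionOnto K w : E)⟫ :=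
        real_inner_comm _ _
    _ = ⟪y, w⟫ := h1
    _ = ⟪w, y⟫ := real_inner_comm _ _

end Aux

/-- For every `v ∈ ℝⁿ` and every trace-free symmetric `M`, there is a `q` putting
`(v, M, q)` in the wave cone `Λ` of the linear subsolution system: there exists
`(c, ξ) ≠ (0, 0)` with `c·v + (M + q·Iₙ)·ξ = 0` and `v·ξ = 0`. -/
theorem wave_cone_surjective {n : ℕ} (hn : 2 ≤ n)
    (v : Evec n) (M : Matrix (Fin n) (Fin n) ℝ) (hMs : M.IsSymm) (hMt : M.trace = 0) :
    ∃ (q : ℝ) (c : ℝ) (ξ : Evec n), ¬(c = 0 ∧ ξ = 0) ∧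
      (∀ i, c * v i + ∑ j, (M + q • (1 : Matrix (Fin n) (Fin n) ℝ)) i j * ξ j = 0) ∧
      ⟪v, ξ⟫ = 0 := by
  by_cases hv : v = 0
  · refine ⟨0, 1, 0, by simp, fun i => by simp [hv], by simp⟩
  -- Let K be the orthogonal complement of v.
  set K : Submodule ℝ (Evec n) := (ℝ ∙ v)ᗮ with hK
  have hKnt : Nontrivial K := by
    rw [Submodule.nontrivial_iff_ne_bot, hK, Ne, Submodule.orthogonal_eq_bot_iff]
    intro htop
    have h1 : Module.finrank ℝ (ℝ ∙ v : Submodule ℝ (Evec n)) = 1 := finrank_span_singleton hv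
    rw [htop, finrank_top] at h1
    have h3 : Module.finrank ℝ (Evec n) = n := finrank_euclideanSpace_fin
    omega
  -- The compression of M to K is a symmetric operator.
  set S : K →ₗ[ℝ] K :=
    (Submodule.orthogonalProjectionOnto K).toLinearMap ∘ₗ (mulVecL M) ∘ₗ K.subtype with hS
  have hSapp : ∀ x : K, (S x : Evec n)
      = (Submodule.orthogonalProjectionOnto K (mulVecL M (x : Evec n)) : Evec n) := fun x => rfl
  have hSsym : S.IsSymmetric := by
    intro x y
    calc ⟪S x, y⟫ = ⟪(S x : Evec n), (y : Evec n)⟫ := rfl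
      _ = ⟪mulVecL M (x : Evec n), (y : Evec n)⟫ := by
          rw [hSapp]; exact proj_inner K _ _ y.2
      _ = ⟪(x : Evec n), mulVecL M (y : Evec n)⟫ := inner_mulVecL M hMs _ _
      _ = ⟪mulVecL M (y : Evec n), (x : Evec n)⟫ := real_inner_comm _ _
      _ = ⟪(S y : Evec n), (x : Evec n)⟫ := by
          rw [hSapp]; exact (proj_inner K _ _ x.2).symm
      _ = ⟪(x : Evec n), (S y : Evec n)⟫ := real_inner_comm _ _
      _ = ⟪x, S y⟫ := rfl
  -- S has an eigenvector ξ' with eigenvalue lam.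
  obtain ⟨lam, hlam⟩ : ∃ lam : ℝ, Module.End.HasEigenvalue S lam :=
    ⟨_, hSsym.hasEigenvalue_iSup_of_finiteDimensional⟩
  obtain ⟨ξ', hξ'⟩ := hlam.exists_hasEigenvector
  set ξ : Evec n := (ξ' : Evec n) with hξdef
  have hξK : ξ ∈ K := ξ'.2
  have hξne : ξ ≠ 0 := fun h => hξ'.2 (Subtype.ext h)
  -- M ξ - lam • ξ lies in Kᗮ = span v.
  have hMem : mulVecL M ξ - lam • ξ ∈ ℝ ∙ v := by
    have h1 : mulVecL M ξ - ((Submodule.orthogonalProjectionOnto K (mulVecL M ξ)) : Evec n) ∈ Kᗮ :=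
      Submodule.sub_starProjection_mem_orthogonal _
    have h2 : ((Submodule.orthogonalProjectionOnto K (mulVecL M ξ)) : Evec n) = lam • ξ := by
      have h3 : S ξ' = lam • ξ' := hξ'.apply_eq_smul
      have h4 := congrArg (Subtype.val) h3
      rw [hSapp] at h4
      simpa [hξdef] using h4
    rw [h2] at h1
    have h5 : Kᗮ = ℝ ∙ v := by rw [hK, Submodule.orthogonal_orthogonal]
    exact h5 ▸ h1
  obtain ⟨μ, hμ⟩ := Submodule.mem_span_singleton.mp hMem
  refine ⟨-lam, -μ, ξ, fun h => hξne h.2, fun i => ?_, ?_⟩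
  · have hμi : mulVecL M ξ i - lam * ξ i = μ * v i := by
      have := congrFun (congrArg (fun (w : Evec n) => (w : Fin n → ℝ)) hμ) i
      simpa using this.symm
    have hsum : ∑ j, (M + (-lam) • (1 : Matrix (Fin n) (Fin n) ℝ)) i j * ξ j
        = mulVecL M ξ i - lam * ξ i := by
      simp only [Matrix.add_apply, Matrix.smul_apply, Matrix.one_apply, smul_eq_mul,
        add_mul, Finset.sum_add_distrib, mulVecL_apply]
      congr 1
      simp [Finset.sum_ite_eq, mul_ite]
    rw [hsum, hμi]; ring
  · have h6 := hξK v (Submodule.mem_span_singleton_self v)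
    first
    | exact h6
    | exact (real_inner_comm ξ v).trans h6
    | exact (real_inner_comm v ξ).trans h6

end
end

section
/- Let n ≥ 2 and let a, b ∈ ℝⁿ with a ≠ b. Set q = (|b|² − |a|²)/n and λ = (b−a, F(b)−F(a), q) ∈ ℝⁿ×𝒮ⁿ₀×ℝ. Then λ ≠ 0 and λ belongs to the wave cone Λ: there exists (c,ξ) ∈ ℝ×ℝⁿ with (c,ξ) ≠ (0,0) such that c·(b−a) + (F(b)−F(a) + q·Iₙ)·ξ = 0 and (b−a)·ξ = 0. -/
open MeasureTheory Metric Set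
open scoped RealInnerProductSpace

noncomputable section

/-- `F(u) = u ⊗ u - (|u|²/n) Iₙ`. -/
def Fmat {n : ℕ} (u : Evec n) : Matrix (Fin n) (Fin n) ℝ :=
  Matrix.of fun i j => u i * u j - if i = j then ‖u‖ ^ 2 / n else 0

/-- For `a ≠ b`, the triple `λ = (b−a, F(b)−F(a), (|b|²−|a|²)/n)` is a nonzero element of
the wave cone `Λ`. -/
theorem difference_in_wave_cone {n : ℕ} (hn : 2 ≤ n)
    (a b : Evec n) (hab : a ≠ b) (q : ℝ) (hq : q = (‖b‖ ^ 2 - ‖a‖ ^ 2) / n) :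
    ((b - a, Fmat b - Fmat a, q) : Evec n × Matrix (Fin n) (Fin n) ℝ × ℝ) ≠ 0 ∧
    ∃ (c : ℝ) (ξ : Evec n), ¬(c = 0 ∧ ξ = 0) ∧
      (∀ i, c * (b - a) i +
        ∑ j, (Fmat b - Fmat a + q • (1 : Matrix (Fin n) (Fin n) ℝ)) i j * ξ j = 0) ∧
      ⟪b - a, ξ⟫ = 0 := by
  have hv : b - a ≠ 0 := sub_ne_zero.mpr (Ne.symm hab)
  constructor
  · intro h
    exact hv (congrArg Prod.fst h)
  -- find a nonzero ξ orthogonal to b - a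
  have hfin : Module.finrank ℝ (Evec n) = n := finrank_euclideanSpace_fin
  set K : Submodule ℝ (Evec n) := ℝ ∙ (b - a) with hK
  have hKrank : Module.finrank ℝ K = 1 := finrank_span_singleton hv
  have hsum := Submodule.finrank_add_finrank_orthogonal (K := K)
  have hpos : 0 < Module.finrank ℝ Kᗮ := by omega
  have hne : Kᗮ ≠ ⊥ := by
    intro h
    rw [h, finrank_bot] at hpos
    exact lt_irrefl 0 hpos
  obtain ⟨x, hxK, hxne⟩ := Submodule.exists_mem_ne_zero_of_ne_bot hne
  refine ⟨-⟪a, x⟫, x, fun h => hxne h.2, ?_, ?_⟩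
  · intro i
    have hbaξ : ⟪b - a, x⟫ = 0 :=
      (Submodule.mem_orthogonal K x).mp hxK _ (Submodule.mem_span_singleton_self _)
    have hbx : ⟪b, x⟫ = ⟪a, x⟫ := by
      have := inner_sub_left (𝕜 := ℝ) b a x
      rw [hbaξ] at this
      linarith
    have hentry : ∀ j, (Fmat b - Fmat a + q • (1 : Matrix (Fin n) (Fin n) ℝ)) i j
        = b i * b j - a i * a j := by
      intro j
      simp only [Matrix.add_apply, Matrix.sub_apply, Matrix.smul_apply, Matrix.one_apply,
        Fmat, Matrix.of_apply, smul_eq_mul, hq]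
      by_cases h : i = j <;> simp [h] <;> ring
    simp only [hentry]
    have hsplit : ∑ j, (b i * b j - a i * a j) * x j
        = b i * ∑ j, b j * x j - a i * ∑ j, a j * x j := by
      rw [Finset.mul_sum, Finset.mul_sum, ← Finset.sum_sub_distrib]
      congr 1; ext j; ring
    have hib : ⟪b, x⟫ = ∑ j, b j * x j := by
      simp [PiLp.inner_apply]
      exact Finset.sum_congr rfl fun j _ => mul_comm _ _
    have hia : ⟪a, x⟫ = ∑ j, a j * x j := by
      simp [PiLp.inner_apply]
      exact Finset.sum_congr rfl fun j _ => mul_comm _ _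
    rw [hsplit, ← hib, ← hia, hbx]
    simp only [PiLp.sub_apply]
    ring
  · exact (Submodule.mem_orthogonal K x).mp hxK _ (Submodule.mem_span_singleton_self _)
end
end
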